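/- Let (Ω,F,P) be a probability space, F_1, F_2 ⊆ F sub-σ-fields, and C_1, C_2, … pairwise disjoint measurable sets with union C. If F_1, F_2 are a nonsingular pair within each C_k, then they are a nonsingular pair within C. -/
import Mathlib


open MeasureTheory Set
open scoped ENNReal

noncomputable section

/-- `F1, F2` are a nonsingular pair within `C`: there is a measurable
`f : Ω × Ω → [0,∞)` with `P(A ∩ B ∩ C) = ∫_{A×B} f d(P⊗P)` for all
`A ∈ F1`, `B ∈ F2`. -/
def NonsingularPair {Ω : Type*} [inst : MeasurableSpace Ω] (P : Measure Ω)
    (F1 F2 : MeasurableSpace Ω) (C : Set Ω) : Prop :=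
  ∃ f : Ω × Ω → ℝ≥0∞,
    @Measurable _ _ (@Prod.instMeasurableSpace Ω Ω inst inst) _ f ∧
    ∀ A B : Set Ω, MeasurableSet[F1] A → MeasurableSet[F2] B →
      P (A ∩ B ∩ C) = ∫⁻ p in A ×ˢ B, f p ∂(@Measure.prod Ω Ω inst inst P P)

theorem stmt8 {Ω : Type*} [inst : MeasurableSpace Ω] (P : Measure Ω)
    [IsProbabilityMeasure P] (C : ℕ → Set Ω)
    (hCm : ∀ k, MeasurableSet (C k)) (hdisj : Pairwise (Function.onFun Disjoint C))
    (F1 F2 : MeasurableSpace Ω) (h1 : F1 ≤ inst) (h2 : F2 ≤ inst)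
    (h : ∀ k, @NonsingularPair Ω inst P F1 F2 (C k)) :
    @NonsingularPair Ω inst P F1 F2 (⋃ k, C k) := by
  choose f hfm hf using h
  refine ⟨fun p => ∑' k, f k p, Measurable.ennreal_tsum hfm, fun A B hA hB => ?_⟩
  rw [inter_iUnion, measure_iUnion
      (fun i j hij => (hdisj hij).mono inter_subset_right inter_subset_right)
      (fun k => ((h1 A hA).inter (h2 B hB)).inter (hCm k))]
  rw [lintegral_tsum (fun k => (hfm k).aemeasurable)]
  exact tsum_congr fun k => hf k A B hA hB
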